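/- Shift-invariance of any model composed with the transformation: let T > 0, let f : AddCircle T → ℂ be integrable with c₁(f) ≠ 0, let φₐ : ℝ, and let t' : ℝ, with g(x) := f(x − ↑t'). Then for every type Y and every map h : (AddCircle T → ℂ) → Y (an arbitrary classifier), h(𝒯(g, φₐ)) = h(𝒯(f, φₐ)); i.e., any classifier precomposed with the transformation 𝒯(·, φₐ) produces identical outputs on all circularly shifted variants of a signal. -/

import Mathlib

open MeasureTheory

/-- `theta T f φ` is the representative in `[0, 2π)` of `arg (c₁ f) − φ` modulo `2π`. -/
noncomputable def theta (T : ℝ) [Fact (0 < T)] (f : AddCircle T → ℂ) (φ : ℝ) : ℝ :=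
  toIcoMod Real.two_pi_pos 0 (Complex.arg (fourierCoeff f 1) - φ)

/-- The computed time-shift amount `Δφ(f, φ)`. -/
noncomputable def deltaPhi (T : ℝ) [Fact (0 < T)] (f : AddCircle T → ℂ) (φ : ℝ) : ℝ :=
  if theta T f φ > Real.pi then (theta T f φ - 2 * Real.pi) * T / (2 * Real.pi)
  else theta T f φ * T / (2 * Real.pi)

/-- The transformation `𝒯(f, φ)`: circularly shift `f` by `Δφ(f, φ)`. -/
noncomputable def transf (T : ℝ) [Fact (0 < T)] (f : AddCircle T → ℂ) (φ : ℝ) :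
    AddCircle T → ℂ :=
  fun x => f (x - (deltaPhi T f φ : AddCircle T))

lemma fourierCoeff_shift {T : ℝ} [hT : Fact (0 < T)] (f : AddCircle T → ℂ)
    (t' : AddCircle T) (n : ℤ) :
    fourierCoeff (fun x => f (x - t')) n = (fourier (-n) t' : ℂ) * fourierCoeff f n := by
  have key : ∀ x : AddCircle T, (fourier (-n) (x + t') : ℂ) • f (x + t' - t')
      = (fourier (-n) t' : ℂ) * ((fourier (-n) x : ℂ) • f x) := by
    intro x
    have : (fourier (-n) (x + t') : ℂ) = (fourier (-n) x : ℂ) * (fourier (-n) t' : ℂ) := by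
      simp [fourier_apply, smul_add, AddCircle.toCircle_add]
    simp only [add_sub_cancel_right, this, smul_eq_mul]
    ring
  calc fourierCoeff (fun x => f (x - t')) n
      = ∫ x : AddCircle T, (fourier (-n) x : ℂ) • f (x - t') ∂AddCircle.haarAddCircle := rfl
    _ = ∫ x : AddCircle T, (fourier (-n) (x + t') : ℂ) • f (x + t' - t')
          ∂AddCircle.haarAddCircle := by
        rw [integral_add_right_eq_self
          (fun x : AddCircle T => (fourier (-n) x : ℂ) • f (x - t')) t']
    _ = ∫ x : AddCircle T, (fourier (-n) t' : ℂ) * ((fourier (-n) x : ℂ) • f x)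
          ∂AddCircle.haarAddCircle := by simp_rw [key]
    _ = (fourier (-n) t' : ℂ) * fourierCoeff f n := by
        rw [integral_const_mul]; rfl

/-- Any classifier precomposed with the transformation `𝒯(·, φₐ)` produces identical
outputs on all circularly shifted variants of a signal. -/
theorem classifier_transf_shift_invariant (T : ℝ) [Fact (0 < T)] (f : AddCircle T → ℂ)
    (hf : Integrable f AddCircle.haarAddCircle) (hc : fourierCoeff f 1 ≠ 0)
    (φₐ t' : ℝ) (Y : Type*) (h : (AddCircle T → ℂ) → Y) :
    h (transf T (fun x => f (x - (t' : AddCircle T))) φₐ) = h (transf T f φₐ) := by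
  have hT : (0 : ℝ) < T := Fact.out
  set g : AddCircle T → ℂ := fun x => f (x - (t' : AddCircle T)) with hg
  -- Fourier coefficient of the shift
  have hcg : fourierCoeff g 1 = (fourier (-1) ((t' : ℝ) : AddCircle T) : ℂ) * fourierCoeff f 1 :=
    fourierCoeff_shift f _ 1
  have hcnz : (fourier (-1) ((t' : ℝ) : AddCircle T) : ℂ) ≠ 0 := Circle.coe_ne_zero _
  -- arg of the fourier character as an angle
  have hfexp : (fourier (-1) ((t' : ℝ) : AddCircle T) : ℂ)
      = Complex.exp ((↑(-(2 * Real.pi * t' / T)) : ℂ) * Complex.I) := by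
    rw [fourier_coe_apply]
    congr 1
    push_cast
    ring
  have hargchar : (Complex.arg (fourier (-1) ((t' : ℝ) : AddCircle T) : ℂ) : Real.Angle)
      = ((-(2 * Real.pi * t' / T) : ℝ) : Real.Angle) := by
    rw [hfexp, Complex.arg_exp_mul_I]
    exact Real.Angle.coe_toIocMod _ _
  have hargang : (Complex.arg (fourierCoeff g 1) : Real.Angle)
      = ((-(2 * Real.pi * t' / T) + Complex.arg (fourierCoeff f 1) : ℝ) : Real.Angle) := by
    rw [hcg, Complex.arg_mul_coe_angle hcnz hc, hargchar, Real.Angle.coe_add]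
  obtain ⟨m, hm⟩ := Real.Angle.angle_eq_iff_two_pi_dvd_sub.mp hargang
  -- theta decompositions
  obtain ⟨kg, hkg⟩ : ∃ k : ℤ, (Complex.arg (fourierCoeff g 1) - φₐ) - theta T g φₐ
      = k * (2 * Real.pi) := by
    refine ⟨toIcoDiv Real.two_pi_pos 0 (Complex.arg (fourierCoeff g 1) - φₐ), ?_⟩
    have := self_sub_toIcoMod Real.two_pi_pos 0 (Complex.arg (fourierCoeff g 1) - φₐ)
    rw [zsmul_eq_mul] at this
    simpa [theta] using this
  obtain ⟨kf, hkf⟩ : ∃ k : ℤ, (Complex.arg (fourierCoeff f 1) - φₐ) - theta T f φₐ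
      = k * (2 * Real.pi) := by
    refine ⟨toIcoDiv Real.two_pi_pos 0 (Complex.arg (fourierCoeff f 1) - φₐ), ?_⟩
    have := self_sub_toIcoMod Real.two_pi_pos 0 (Complex.arg (fourierCoeff f 1) - φₐ)
    rw [zsmul_eq_mul] at this
    simpa [theta] using this
  -- deltaPhi in terms of theta
  have hd : ∀ f' : AddCircle T → ℂ, ∃ e : ℤ,
      deltaPhi T f' φₐ = theta T f' φₐ * T / (2 * Real.pi) - e * T := by
    intro f'
    unfold deltaPhi
    split_ifs
    · refine ⟨1, ?_⟩
      field_simp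
      ring
    · exact ⟨0, by push_cast; ring⟩
  obtain ⟨eg, heg⟩ := hd g
  obtain ⟨ef, hef⟩ := hd f
  -- the key real identity
  have hkey : deltaPhi T g φₐ + t' - deltaPhi T f φₐ = ((m + kf - kg - eg + ef : ℤ) : ℝ) * T := by
    have hπ : Real.pi ≠ 0 := Real.pi_ne_zero
    have hTne : T ≠ 0 := ne_of_gt hT
    have hm' := congrArg (· * T) hm
    field_simp at hm'
    rw [heg, hef]
    push_cast
    field_simp
    linear_combination hm' - T * hkg + T * hkf
  -- conclude in AddCircle
  have hcoe : ((deltaPhi T g φₐ : ℝ) : AddCircle T) + ((t' : ℝ) : AddCircle T)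
      = ((deltaPhi T f φₐ : ℝ) : AddCircle T) := by
    have h1 : ((deltaPhi T g φₐ + t' : ℝ) : AddCircle T)
        = ((deltaPhi T f φₐ + ((m + kf - kg - eg + ef : ℤ) : ℝ) * T : ℝ) : AddCircle T) := by
      congr 1
      linarith [hkey]
    have h2 : ((((m + kf - kg - eg + ef : ℤ) : ℝ) * T : ℝ) : AddCircle T) = 0 := by
      rw [← zsmul_eq_mul, AddCircle.coe_zsmul, AddCircle.coe_period, smul_zero]
    calc ((deltaPhi T g φₐ : ℝ) : AddCircle T) + ((t' : ℝ) : AddCircle T)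
        = ((deltaPhi T g φₐ + t' : ℝ) : AddCircle T) := (AddCircle.coe_add (p := T) _ _).symm
      _ = ((deltaPhi T f φₐ : ℝ) : AddCircle T)
            + ((((m + kf - kg - eg + ef : ℤ) : ℝ) * T : ℝ) : AddCircle T) := by
          rw [h1, AddCircle.coe_add]
      _ = ((deltaPhi T f φₐ : ℝ) : AddCircle T) := by rw [h2, add_zero]
  congr 1
  funext x
  show f (x - (deltaPhi T g φₐ : AddCircle T) - (t' : AddCircle T)) = f _
  rw [sub_sub, hcoe]
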